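/- In the nearest-common-ancestor labeling of a rooted tree based on heavy-path decomposition, where the root gets label (id(root), 0), a heavy child inherits its parent's label with the distance of the last pair incremented by one, and a light child v gets its parent's label with the pair (id(v), 0) appended, every node's label is a list of at most 1 + log₂(n) pairs. -/

import Mathlib

/-- A finite rooted tree given by parent pointers: the root is a fixed point of
`parent`, and iterating `parent` from any node eventually reaches the root. -/
structure ParentTree (V : Type*) where
  root : V
  parent : V → V
  parent_root : parent root = root
  reaches_root : ∀ v, ∃ k, parent^[k] v = root

variable {V : Type*}

/-- The number of nodes in the subtree rooted at `v`. -/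
noncomputable def ParentTree.size (t : ParentTree V) (v : V) : ℕ :=
  Set.ncard {u | ∃ k, t.parent^[k] u = v}

/-- The depth of a node: its distance to the root. -/
def ParentTree.depth [DecidableEq V] (t : ParentTree V) (v : V) : ℕ :=
  Nat.find (t.reaches_root v)

/-- `c` is a child of `u`. -/
def ParentTree.IsChild (t : ParentTree V) (c u : V) : Prop :=
  c ≠ u ∧ t.parent c = u

/-- `heavy` designates, for every internal node `u`, exactly one child of `u`
whose subtree size is maximal among all children of `u`. -/
def HeavyValid (t : ParentTree V) (heavy : V → V) : Prop :=
  ∀ u, (∃ c, t.IsChild c u) →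
    t.IsChild (heavy u) u ∧ ∀ c, t.IsChild c u → t.size c ≤ t.size (heavy u)

/-- Increment the distance component of the last pair of a label. -/
def incLast (l : List (ℕ × ℕ)) : List (ℕ × ℕ) :=
  l.dropLast ++ [(l.getLast!.1, l.getLast!.2 + 1)]

/-- `ℓ` is the nearest-common-ancestor labeling of the rooted tree `t` based on
the heavy-path decomposition given by `heavy`: the root is labeled
`[(id root, 0)]`, a heavy child inherits its parent's label with the distance of
the last pair incremented by one, and a light child `v` gets its parent's label
with the pair `(id v, 0)` appended. -/
def IsNCALabeling (t : ParentTree V) (heavy : V → V) (idf : V → ℕ)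
    (ℓ : V → List (ℕ × ℕ)) : Prop :=
  ℓ t.root = [(idf t.root, 0)] ∧
  ∀ v, v ≠ t.root →
    (heavy (t.parent v) = v → ℓ v = incLast (ℓ (t.parent v))) ∧
    (heavy (t.parent v) ≠ v → ℓ v = ℓ (t.parent v) ++ [(idf v, 0)])

/-- `a` is an ancestor of `v` (possibly `v` itself). -/
def ParentTree.Anc (t : ParentTree V) (a v : V) : Prop :=
  ∃ k, t.parent^[k] v = a

/-- `a` is the nearest common ancestor of `u` and `v`: a common ancestor such
that every common ancestor of `u` and `v` is an ancestor of `a`. -/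
def IsNca (t : ParentTree V) (a u v : V) : Prop :=
  t.Anc a u ∧ t.Anc a v ∧ ∀ b, t.Anc b u → t.Anc b v → t.Anc b a

lemma iter_root (t : ParentTree V) (k : ℕ) : t.parent^[k] t.root = t.root :=
  Function.iterate_fixed t.parent_root k

lemma eq_root_of_periodic (t : ParentTree V) {u : V} {m : ℕ} (hm : 1 ≤ m)
    (h : t.parent^[m] u = u) : u = t.root := by
  obtain ⟨k, hk⟩ := t.reaches_root u
  have hiter : ∀ a : ℕ, t.parent^[a * m] u = u := by
    intro a
    induction a with
    | zero => simp
    | succ n ih =>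
        rw [Nat.succ_mul, Function.iterate_add_apply, h, ih]
  have hkm : k ≤ k * m := Nat.le_mul_of_pos_right k hm
  calc u = t.parent^[k * m] u := (hiter k).symm
    _ = t.parent^[k * m - k] (t.parent^[k] u) := by
        rw [← Function.iterate_add_apply]; congr 1; omega
    _ = t.root := by rw [hk]; exact iter_root t _

lemma root_not_mem_subtree_child (t : ParentTree V) {c u : V}
    (hc : t.IsChild c u) : ∀ k, t.parent^[k] u ≠ c := by
  intro k hk
  have h1 : t.parent^[k + 1] u = u := by
    rw [Function.iterate_succ_apply', hk, hc.2]
  have hur : u = t.root := eq_root_of_periodic t (by omega) h1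
  have : c = t.root := by rw [← hk, hur, iter_root]
  exact hc.1 (this.trans hur.symm)

/-- Two children of the same node with one an ancestor of the other are equal. -/
lemma child_anc_child (t : ParentTree V) {c₁ c₂ u : V}
    (h1 : t.IsChild c₁ u) (h2 : t.IsChild c₂ u)
    {m : ℕ} (h : t.parent^[m] c₁ = c₂) : c₁ = c₂ := by
  rcases Nat.eq_zero_or_pos m with hm | hm
  · subst hm; simpa using h
  · exfalso
    have h3 : t.parent^[m] u = u := by
      have : t.parent^[m + 1] c₁ = u := by
        rw [Function.iterate_succ_apply', h, h2.2]
      rw [Function.iterate_succ_apply, h1.2] at this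
      exact this
    have hur : u = t.root := eq_root_of_periodic t hm h3
    have hc2 : c₂ = t.root := by
      have : t.parent^[m] c₁ = t.parent^[m - 1] u := by
        conv_lhs => rw [show m = (m - 1) + 1 by omega]
        rw [Function.iterate_succ_apply, h1.2]
      rw [this, hur, iter_root] at h
      exact h.symm
    exact h2.1 (hc2.trans hur.symm)

lemma subtree_subset_parent (t : ParentTree V) {c u : V} (h : t.parent c = u) :
    {w | ∃ k, t.parent^[k] w = c} ⊆ {w | ∃ k, t.parent^[k] w = u} := by
  rintro w ⟨k, hk⟩
  exact ⟨k + 1, by rw [Function.iterate_succ_apply', hk, h]⟩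

lemma size_le_size_parent [Finite V] (t : ParentTree V) {c u : V}
    (h : t.parent c = u) : t.size c ≤ t.size u :=
  Set.ncard_le_ncard (subtree_subset_parent t h) (Set.toFinite _)

lemma one_le_size [Finite V] (t : ParentTree V) (v : V) : 1 ≤ t.size v := by
  have : v ∈ {w | ∃ k, t.parent^[k] w = v} := ⟨0, rfl⟩
  have h : {w | ∃ k, t.parent^[k] w = v}.Nonempty := ⟨v, this⟩
  have := Set.nonempty_iff_ne_empty.mp h
  rw [ParentTree.size]
  have := Set.ncard_pos (Set.toFinite _) |>.mpr h
  omega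

lemma subtrees_disjoint (t : ParentTree V) {c₁ c₂ u : V}
    (h1 : t.IsChild c₁ u) (h2 : t.IsChild c₂ u) (hne : c₁ ≠ c₂) :
    Disjoint {w | ∃ k, t.parent^[k] w = c₁} {w | ∃ k, t.parent^[k] w = c₂} := by
  rw [Set.disjoint_left]
  rintro w ⟨j, hj⟩ ⟨k, hk⟩
  rcases le_total j k with hjk | hjk
  · have : t.parent^[k - j] c₁ = c₂ := by
      rw [← hj, ← Function.iterate_add_apply]
      rw [show k - j + j = k by omega, hk]
    exact hne (child_anc_child t h1 h2 this)
  · have : t.parent^[j - k] c₂ = c₁ := by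
      rw [← hk, ← Function.iterate_add_apply]
      rw [show j - k + k = j by omega, hj]
    exact hne (child_anc_child t h2 h1 this).symm

/-- A light child's subtree is at most half its parent's. -/
lemma light_child_size [Finite V] (t : ParentTree V) {heavy : V → V}
    (hheavy : HeavyValid t heavy) {c u : V} (hc : t.IsChild c u)
    (hl : heavy u ≠ c) : 2 * t.size c ≤ t.size u := by
  obtain ⟨hh, hmax⟩ := hheavy u ⟨c, hc⟩
  set Sh := {w | ∃ k, t.parent^[k] w = heavy u} with hSh
  set Sc := {w | ∃ k, t.parent^[k] w = c} with hSc
  set Su := {w | ∃ k, t.parent^[k] w = u} with hSu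
  have hdisj : Disjoint Sh Sc := subtrees_disjoint t hh hc hl
  have hsub : Sh ∪ Sc ⊆ Su :=
    Set.union_subset (subtree_subset_parent t hh.2) (subtree_subset_parent t hc.2)
  have hcard : (Sh ∪ Sc).ncard = Sh.ncard + Sc.ncard :=
    Set.ncard_union_eq hdisj (Set.toFinite _) (Set.toFinite _)
  have hle : (Sh ∪ Sc).ncard ≤ Su.ncard := Set.ncard_le_ncard hsub (Set.toFinite _)
  have hch : t.size c ≤ t.size (heavy u) := hmax c hc
  have : t.size (heavy u) + t.size c ≤ t.size u := by
    rw [ParentTree.size, ParentTree.size, ParentTree.size]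
    rw [← hcard]; exact hle
  omega

lemma size_root_eq [Fintype V] (t : ParentTree V) :
    t.size t.root = Fintype.card V := by
  have : {w | ∃ k, t.parent^[k] w = t.root} = Set.univ := by
    ext w; simpa using t.reaches_root w
  rw [ParentTree.size, this, Set.ncard_univ, Nat.card_eq_fintype_card]

lemma self_ne_parent (t : ParentTree V) {v : V} (hv : v ≠ t.root) :
    v ≠ t.parent v := by
  intro h
  exact hv (eq_root_of_periodic t (le_refl 1) (by simpa using h.symm))

/-- In the heavy-path NCA labeling of a rooted tree on `n` nodes, every node's
label is a list of at most `1 + log₂ n` pairs. -/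
theorem label_length_le [Fintype V]
    (t : ParentTree V) (heavy : V → V) (idf : V → ℕ) (ℓ : V → List (ℕ × ℕ))
    (hheavy : HeavyValid t heavy) (hid : Function.Injective idf)
    (hl : IsNCALabeling t heavy idf ℓ) :
    ∀ v, (ℓ v).length ≤ 1 + Nat.log 2 (Fintype.card V) := by
  have key : ∀ k v, t.parent^[k] v = t.root →
      ℓ v ≠ [] ∧ 2 ^ (ℓ v).length * t.size v ≤ 2 * t.size t.root := by
    intro k
    induction k with
    | zero =>
        intro v hv
        simp only [Function.iterate_zero, id] at hv
        subst hv
        rw [hl.1]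
        constructor
        · simp
        · simp [pow_one, two_mul]
    | succ k ih =>
        intro v hv
        by_cases hvr : v = t.root
        · subst hvr
          rw [hl.1]
          constructor
          · simp
          · simp [pow_one, two_mul]
        · rw [Function.iterate_succ_apply] at hv
          obtain ⟨hne, hbd⟩ := ih (t.parent v) hv
          have hchild : t.IsChild v (t.parent v) := ⟨self_ne_parent t hvr, rfl⟩
          have hszle : t.size v ≤ t.size (t.parent v) := size_le_size_parent t rfl
          by_cases hh : heavy (t.parent v) = v
          · -- heavy child: same label length
            have hlab := (hl.2 v hvr).1 hh
            have hlen : (ℓ v).length = (ℓ (t.parent v)).length := by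
              rw [hlab, incLast, List.length_append, List.length_dropLast,
                List.length_singleton]
              have : 1 ≤ (ℓ (t.parent v)).length := by
                cases h : ℓ (t.parent v) with
                | nil => exact absurd h hne
                | cons a l => simp
              omega
            constructor
            · rw [hlab, incLast]; simp
            · rw [hlen]
              calc 2 ^ (ℓ (t.parent v)).length * t.size v
                  ≤ 2 ^ (ℓ (t.parent v)).length * t.size (t.parent v) :=
                    Nat.mul_le_mul_left _ hszle
                _ ≤ 2 * t.size t.root := hbd
          · -- light child: length increases by 1, size at most halves
            have hlab := (hl.2 v hvr).2 hh
            have hlt : 2 * t.size v ≤ t.size (t.parent v) :=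
              light_child_size t hheavy hchild hh
            constructor
            · rw [hlab]; simp
            · rw [hlab, List.length_append, List.length_singleton, pow_succ]
              calc 2 ^ (ℓ (t.parent v)).length * 2 * t.size v
                  = 2 ^ (ℓ (t.parent v)).length * (2 * t.size v) := by ring
                _ ≤ 2 ^ (ℓ (t.parent v)).length * t.size (t.parent v) :=
                    Nat.mul_le_mul_left _ hlt
                _ ≤ 2 * t.size t.root := hbd
  intro v
  obtain ⟨k, hk⟩ := t.reaches_root v
  obtain ⟨-, hbd⟩ := key k v hk
  have hsz : 1 ≤ t.size v := one_le_size t v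
  have h1 : 2 ^ (ℓ v).length ≤ 2 * Fintype.card V := by
    calc 2 ^ (ℓ v).length = 2 ^ (ℓ v).length * 1 := by ring
      _ ≤ 2 ^ (ℓ v).length * t.size v := Nat.mul_le_mul_left _ hsz
      _ ≤ 2 * t.size t.root := hbd
      _ = 2 * Fintype.card V := by rw [size_root_eq]
  have hcard : Fintype.card V ≠ 0 := by
    have : Nonempty V := ⟨t.root⟩
    exact Fintype.card_ne_zero
  have h2 : (ℓ v).length ≤ Nat.log 2 (2 * Fintype.card V) :=
    (Nat.le_log_iff_pow_le one_lt_two (by positivity)).mpr h1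
  rwa [mul_comm, Nat.log_mul_base one_lt_two hcard, add_comm] at h2
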